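/- Let N ≥ 1 and let S_1, …, S_{N+1} be real-valued random variables on a probability space (Ω, 𝓕, μ) such that the family (S_1, …, S_{N+1}) is exchangeable. For every k ∈ {1, …, N+1}, let T_k(ω) denote the k-th order statistic of all N+1 values S_1(ω), …, S_{N+1}(ω). Then μ( S_{N+1} ≤ T_k ) ≥ k/(N+1). -/

import Mathlib

open MeasureTheory
open scoped ENNReal

/-- A finite family of random variables is exchangeable if its joint law is invariant
under permutations of the indices. -/
def Exchangeable {Ω E : Type*} [MeasurableSpace Ω] [MeasurableSpace E]
    (μ : Measure Ω) {M : ℕ} (Z : Fin M → Ω → E) : Prop :=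
  ∀ σ : Equiv.Perm (Fin M),
    Measure.map (fun ω => fun i => Z (σ i) ω) μ = Measure.map (fun ω => fun i => Z i ω) μ

/-- The `k`-th order statistic (1-indexed, counted with multiplicity) of the values
`s 0, …, s (m-1)`: the least `x` such that at least `k` of the values are `≤ x`. -/
noncomputable def orderStat {m : ℕ} (s : Fin m → ℝ) (k : ℕ) : ℝ :=
  sInf {x : ℝ | k ≤ (Finset.univ.filter fun i => s i ≤ x).card}

namespace ExchRankAux

variable {m k : ℕ}

lemma Qne (hk : k ≤ m) (hm : 0 < m) (s : Fin m → ℝ) :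
    Set.Nonempty {x : ℝ | k ≤ (Finset.univ.filter fun i => s i ≤ x).card} := by
  haveI : Nonempty (Fin m) := Fin.pos_iff_nonempty.mp hm
  refine ⟨Finset.univ.sup' Finset.univ_nonempty s, ?_⟩
  have h : (Finset.univ.filter fun i => s i ≤ Finset.univ.sup' Finset.univ_nonempty s)
      = Finset.univ :=
    Finset.filter_true_of_mem fun i _ => Finset.le_sup' s (Finset.mem_univ i)
  show k ≤ _
  rw [h, Finset.card_univ, Fintype.card_fin]
  exact hk

lemma Qbdd (hk1 : 1 ≤ k) (hm : 0 < m) (s : Fin m → ℝ) :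
    BddBelow {x : ℝ | k ≤ (Finset.univ.filter fun i => s i ≤ x).card} := by
  haveI : Nonempty (Fin m) := Fin.pos_iff_nonempty.mp hm
  refine ⟨Finset.univ.inf' Finset.univ_nonempty s, fun x hx => ?_⟩
  have hpos : 0 < (Finset.univ.filter fun i => s i ≤ x).card := lt_of_lt_of_le hk1 hx
  obtain ⟨i, hi⟩ := Finset.card_pos.mp hpos
  exact le_trans (Finset.inf'_le s (Finset.mem_univ i)) (Finset.mem_filter.mp hi).2

lemma orderStat_mem (hm : 0 < m) (hk1 : 1 ≤ k) (hk : k ≤ m) (s : Fin m → ℝ) :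
    k ≤ (Finset.univ.filter fun i => s i ≤ orderStat s k).card := by
  by_contra h
  push_neg at h
  by_cases hne : (Finset.univ.filter fun i => orderStat s k < s i).Nonempty
  · set u := Finset.inf' _ hne s with hu
    have htu : orderStat s k < u := by
      rw [hu]
      exact (Finset.lt_inf'_iff _).mpr fun i hi => (Finset.mem_filter.mp hi).2
    have hub : ∀ x ∈ {x : ℝ | k ≤ (Finset.univ.filter fun i => s i ≤ x).card}, u ≤ x := by
      intro x hx
      by_contra hxu
      push_neg at hxu
      have hsub : (Finset.univ.filter fun i => s i ≤ x)
          ⊆ (Finset.univ.filter fun i => s i ≤ orderStat s k) := by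
        intro i hi
        simp only [Finset.mem_filter, Finset.mem_univ, true_and] at hi ⊢
        by_contra hit
        push_neg at hit
        have : u ≤ s i := Finset.inf'_le s (by simp [hit])
        linarith
      have := le_trans hx (Finset.card_le_card hsub)
      omega
    have : u ≤ orderStat s k := le_csInf (Qne hk hm s) hub
    linarith
  · have h2 : (Finset.univ.filter fun i => s i ≤ orderStat s k) = Finset.univ := by
      refine Finset.filter_true_of_mem fun i _ => ?_
      by_contra hit
      push_neg at hit
      exact hne ⟨i, by simp [hit]⟩
    rw [h2, Finset.card_univ, Fintype.card_fin] at h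
    omega

lemma le_orderStat_iff (hm : 0 < m) (hk1 : 1 ≤ k) (hk : k ≤ m) (s : Fin m → ℝ) (j : Fin m) :
    s j ≤ orderStat s k ↔ (Finset.univ.filter fun i => s i < s j).card < k := by
  constructor
  · intro hj
    by_cases hC : (Finset.univ.filter fun i => s i < s j).Nonempty
    · set x := Finset.sup' _ hC s with hx
      have hxj : x < s j := by
        rw [hx]
        exact (Finset.sup'_lt_iff _).mpr fun i hi => (Finset.mem_filter.mp hi).2
      have hxt : x < orderStat s k := lt_of_lt_of_le hxj hj
      have hxQ : ¬ k ≤ (Finset.univ.filter fun i => s i ≤ x).card := by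
        intro hmem
        exact absurd (csInf_le (Qbdd hk1 hm s) hmem) (not_le.mpr hxt)
      push_neg at hxQ
      refine lt_of_le_of_lt (Finset.card_le_card ?_) hxQ
      intro i hi
      simp only [Finset.mem_filter, Finset.mem_univ, true_and] at hi ⊢
      exact Finset.le_sup' s (by simp [hi])
    · rw [Finset.not_nonempty_iff_eq_empty] at hC
      rw [hC]
      simp only [Finset.card_empty]; exact hk1
  · intro hcard
    refine le_csInf (Qne hk hm s) fun x hx => ?_
    by_contra hxj
    push_neg at hxj
    have hsub : (Finset.univ.filter fun i => s i ≤ x)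
        ⊆ (Finset.univ.filter fun i => s i < s j) := by
      intro i hi
      simp only [Finset.mem_filter, Finset.mem_univ, true_and] at hi ⊢
      linarith
    have := le_trans hx (Finset.card_le_card hsub)
    omega

lemma card_rank_lt (hm : 0 < m) (hk1 : 1 ≤ k) (hk : k ≤ m) (s : Fin m → ℝ) :
    k ≤ (Finset.univ.filter fun j => (Finset.univ.filter fun i => s i < s j).card < k).card := by
  refine le_trans (orderStat_mem hm hk1 hk s) (Finset.card_le_card ?_)
  intro j hj
  simp only [Finset.mem_filter, Finset.mem_univ, true_and] at hj ⊢
  exact (le_orderStat_iff hm hk1 hk s j).mp hj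

end ExchRankAux

/-- Quantile/rank inequality for exchangeable real random variables: the last of `N+1`
exchangeable scores is at most the `k`-th order statistic of all `N+1` scores with
probability at least `k / (N+1)`. -/
theorem exchangeable_rank_inequality
    {Ω : Type*} [MeasurableSpace Ω] (μ : Measure Ω) [IsProbabilityMeasure μ]
    (N : ℕ) (hN : 1 ≤ N)
    (S : Fin (N + 1) → Ω → ℝ) (hSmeas : ∀ i, Measurable (S i))
    (hexch : Exchangeable μ S)
    (k : ℕ) (hk1 : 1 ≤ k) (hk2 : k ≤ N + 1) :
    (k : ℝ≥0∞) / ((N : ℝ≥0∞) + 1) ≤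
      μ {ω | S (Fin.last N) ω ≤ orderStat (fun i : Fin (N + 1) => S i ω) k} := by
  have hm : 0 < N + 1 := Nat.succ_pos N
  set B : Set (Fin (N + 1) → ℝ) :=
    {v | (Finset.univ.filter fun i => v i < v (Fin.last N)).card < k} with hBdef
  have hBmeas : MeasurableSet B := by
    have hf : Measurable fun v : Fin (N + 1) → ℝ =>
        (Finset.univ.filter fun i => v i < v (Fin.last N)).card := by
      have h : (fun v : Fin (N + 1) → ℝ =>
          (Finset.univ.filter fun i => v i < v (Fin.last N)).card)
          = fun v => ∑ i : Fin (N + 1), if v i < v (Fin.last N) then 1 else 0 := by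
        funext v
        rw [Finset.card_filter]
      rw [h]
      exact Finset.measurable_sum _ fun i _ =>
        Measurable.ite
          (measurableSet_lt (measurable_pi_apply i) (measurable_pi_apply (Fin.last N)))
          measurable_const measurable_const
    exact hf (MeasurableSet.of_discrete (s := Set.Iio k))
  set A : Fin (N + 1) → Set Ω :=
    fun j => {ω | (Finset.univ.filter fun i => S i ω < S j ω).card < k} with hAdef
  have hAmeas : ∀ j, MeasurableSet (A j) := by
    intro j
    have hf : Measurable fun ω =>
        (Finset.univ.filter fun i => S i ω < S j ω).card := by
      have h : (fun ω => (Finset.univ.filter fun i => S i ω < S j ω).card)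
          = fun ω => ∑ i : Fin (N + 1), if S i ω < S j ω then 1 else 0 := by
        funext ω
        rw [Finset.card_filter]
      rw [h]
      exact Finset.measurable_sum _ fun i _ =>
        Measurable.ite (measurableSet_lt (hSmeas i) (hSmeas j))
          measurable_const measurable_const
    exact hf (MeasurableSet.of_discrete (s := Set.Iio k))
  have hkey : ∀ j, A j = (fun ω => fun i => S (Equiv.swap j (Fin.last N) i) ω) ⁻¹' B := by
    intro j
    ext ω
    simp only [hAdef, hBdef, Set.mem_setOf_eq, Set.mem_preimage]
    have hcard : (Finset.univ.filter fun i =>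
          S (Equiv.swap j (Fin.last N) i) ω < S (Equiv.swap j (Fin.last N) (Fin.last N)) ω).card
        = (Finset.univ.filter fun i => S i ω < S j ω).card := by
      rw [Equiv.swap_apply_right]
      refine Finset.card_equiv (Equiv.swap j (Fin.last N)) fun i => ?_
      simp [Finset.mem_filter]
    rw [← hcard]
  have hAlast : A (Fin.last N) = (fun ω => fun i => S i ω) ⁻¹' B := by
    ext ω
    simp [hAdef, hBdef]
  have hA : ∀ j, μ (A j) = μ (A (Fin.last N)) := by
    intro j
    rw [hkey j, hAlast,
      ← Measure.map_apply (measurable_pi_lambda _ fun i => hSmeas (Equiv.swap j (Fin.last N) i))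
        hBmeas,
      ← Measure.map_apply (measurable_pi_lambda _ fun i => hSmeas i) hBmeas,
      hexch (Equiv.swap j (Fin.last N))]
  have hpt : ∀ ω, (k : ℝ≥0∞) ≤ ∑ j : Fin (N + 1), (A j).indicator (fun _ => (1 : ℝ≥0∞)) ω := by
    intro ω
    have hc := ExchRankAux.card_rank_lt hm hk1 hk2 (fun i => S i ω)
    have heq : ∑ j : Fin (N + 1), (A j).indicator (fun _ => (1 : ℝ≥0∞)) ω
        = ((Finset.univ.filter fun j : Fin (N + 1) => ω ∈ A j).card : ℝ≥0∞) := by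
      rw [Finset.card_filter]
      push_cast
      refine Finset.sum_congr rfl fun j _ => ?_
      by_cases hj : ω ∈ A j <;> simp [Set.indicator_apply, hj]
    rw [heq]
    have : (Finset.univ.filter fun j : Fin (N + 1) => ω ∈ A j)
        = (Finset.univ.filter fun j =>
            (Finset.univ.filter fun i => S i ω < S j ω).card < k) := rfl
    rw [this]
    exact_mod_cast hc
  have hsum : (k : ℝ≥0∞) ≤ ∑ j : Fin (N + 1), μ (A j) := by
    calc (k : ℝ≥0∞) = ∫⁻ _, (k : ℝ≥0∞) ∂μ := by simp
      _ ≤ ∫⁻ ω, ∑ j : Fin (N + 1), (A j).indicator (fun _ => (1 : ℝ≥0∞)) ω ∂μ :=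
          lintegral_mono fun ω => hpt ω
      _ = ∑ j : Fin (N + 1), ∫⁻ ω, (A j).indicator (fun _ => (1 : ℝ≥0∞)) ω ∂μ :=
          lintegral_finset_sum _ fun j _ => measurable_const.indicator (hAmeas j)
      _ = ∑ j : Fin (N + 1), μ (A j) := by
          refine Finset.sum_congr rfl fun j _ => ?_
          exact lintegral_indicator_one (hAmeas j)
  have hsum2 : (k : ℝ≥0∞) ≤ ((N : ℝ≥0∞) + 1) * μ (A (Fin.last N)) := by
    calc (k : ℝ≥0∞) ≤ ∑ j : Fin (N + 1), μ (A j) := hsum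
      _ = ((N : ℝ≥0∞) + 1) * μ (A (Fin.last N)) := by
          rw [Finset.sum_congr rfl fun j _ => hA j, Finset.sum_const, Finset.card_univ,
            Fintype.card_fin, nsmul_eq_mul]
          push_cast
          ring
  have hgoal : {ω | S (Fin.last N) ω ≤ orderStat (fun i : Fin (N + 1) => S i ω) k}
      = A (Fin.last N) := by
    ext ω
    simp only [hAdef, Set.mem_setOf_eq]
    exact ExchRankAux.le_orderStat_iff hm hk1 hk2 (fun i => S i ω) (Fin.last N)
  rw [hgoal]
  rw [ENNReal.div_le_iff_le_mul (Or.inl (by simp)) (Or.inl (by finiteness))]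
  rw [mul_comm]
  exact hsum2
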